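/- Let (A,∘,[·,·]) be a Gel'fand-Dorfman bialgebra over K of codimension 1 in a vector space E. Assume the sub-adjacent Lie algebra g(A) (with bracket a∘b − b∘a) is perfect, every quasicentroid of the Novikov algebra (A,∘) is inner, and moreover {b ∈ A : a∘b = 0 for all a ∈ A} = {0}. Then Extd(E,A) is in bijection with the disjoint union (SF2(A)/≈) ⊔ (SF3(A)/≈), where: SF2(A) is the set of GD flag datums with p = q = η = 0, T = 0 and a1 = 0, written (S,k,D), with (S,k,D) ≈ (S',k',D') iff there exists β ∈ K* with S = βS', k = βk' and D = βD'; and SF3(A) is the set of GD flag datums with p = 0, T = 0, k = 0 and q ≠ 0, written (q,S,a1,η,D), with (q,S,a1,η,D) ≈ (q',S',a1',η',D') iff q = q', η = η' and there exists β ∈ K* with S = βS', a1 = β²a1' and D = βD'. -/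

import Mathlib

namespace GDExt

def IsNovikov {M : Type*} [AddCommGroup M] (mul : M → M → M) : Prop :=
  (∀ a b c, mul (mul a b) c - mul a (mul b c) = mul (mul b a) c - mul b (mul a c)) ∧
  ∀ a b c, mul (mul a b) c = mul (mul a c) b

def IsLieBracket {M : Type*} [AddCommGroup M] (br : M → M → M) : Prop :=
  (∀ a, br a a = 0) ∧ ∀ a b c, br a (br b c) = br (br a b) c + br b (br a c)

def IsGD {M : Type*} [AddCommGroup M] (mul br : M → M → M) : Prop :=
  IsNovikov mul ∧ IsLieBracket br ∧
  ∀ a b c, br a (mul b c) - br c (mul b a) + mul (br b a) c - mul (br b c) a - mul b (br a c) = 0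

variable {K : Type*} [Field K]
variable {A V : Type*} [AddCommGroup A] [Module K A] [AddCommGroup V] [Module K V]

/-- First component bilinear product of the unified product `A ♮ V`. -/
def uniMul (circ : A →ₗ[K] A →ₗ[K] A) (lA rA : A →ₗ[K] Module.End K V)
    (lV rV : V →ₗ[K] Module.End K A) (f : V →ₗ[K] V →ₗ[K] A)
    (st : V →ₗ[K] V →ₗ[K] V) : A × V → A × V → A × V :=
  fun p q =>
    (circ p.1 q.1 + lV p.2 q.1 + rV q.2 p.1 + f p.2 q.2,
     st p.2 q.2 + lA p.1 q.2 + rA q.1 p.2)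

/-- Bracket of the unified product `A ♮ V`. -/
def uniBr (brk : A →ₗ[K] A →ₗ[K] A) (tl : V →ₗ[K] A →ₗ[K] V) (tr : V →ₗ[K] A →ₗ[K] A)
    (hm : V →ₗ[K] V →ₗ[K] A) (vbr : V →ₗ[K] V →ₗ[K] V) : A × V → A × V → A × V :=
  fun p q =>
    (brk p.1 q.1 + tr p.2 q.1 - tr q.2 p.1 + hm p.2 q.2,
     vbr p.2 q.2 + tl p.2 q.1 - tl q.2 p.1)

end GDExt

namespace GDExt

variable (K : Type*) [Field K]
variable (A : Type*) [AddCommGroup A] [Module K A]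

/-- The data of a Gel'fand-Dorfman flag datum. -/
structure FlagData where
  p : A →ₗ[K] K
  q : A →ₗ[K] K
  S : A →ₗ[K] A
  T : A →ₗ[K] A
  a1 : A
  k : K
  eta : A →ₗ[K] K
  D : A →ₗ[K] A

variable {K A}

/-- Conditions (FN1)-(FN10), (TD1)-(TD2) and (GF1)-(GF6) for a GD flag datum of the
GD bialgebra `(A, circ, brk)`. -/
def IsFlagDatum (circ brk : A →ₗ[K] A →ₗ[K] A) (d : FlagData K A) : Prop :=
  -- (FN1)
  (∀ a b : A, d.p (circ a b) = d.p (circ b a)) ∧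
  (∀ a b : A, d.q (circ a b) = d.q a * d.q b) ∧
  -- (FN2)
  (∀ a b : A, d.S (circ a b) = circ (d.S a) b + circ a (d.S b) + (d.q a - d.p a) • d.S b
      + d.q b • d.T a - circ (d.T a) b) ∧
  -- (FN3)
  (∀ a b : A, d.T (circ a b) - d.T (circ b a)
      = d.p b • d.T a - d.p a • d.T b + circ a (d.T b) - circ b (d.T a)) ∧
  -- (FN4)
  (∀ a : A, d.T (d.T a) = d.T (d.S a) - d.S (d.T a) + circ a d.a1
      + (d.q a - 2 * d.p a) • d.a1 + d.k • d.T a) ∧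
  -- (FN5)
  (∀ a : A, d.p (d.S a) - d.p (d.T a) = d.q (d.T a) + d.k * (d.p a - d.q a)) ∧
  -- (FN6)
  (∀ a b : A, circ (d.S a) b + d.q a • d.S b = circ (d.S b) a + d.q b • d.S a) ∧
  -- (FN7)
  (∀ a b : A, d.T (circ a b) = circ (d.T a) b + d.p a • d.S b) ∧
  -- (FN8)
  (∀ a b : A, d.p (circ a b) = d.p a * d.q b) ∧
  -- (FN9)
  (∀ a : A, d.T (d.S a) = circ d.a1 a + d.k • d.S a - d.q a • d.a1) ∧
  -- (FN10)
  (∀ a : A, d.p (d.S a) = 0) ∧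
  -- (TD1)
  (∀ a b : A, d.eta (brk a b) = 0) ∧
  -- (TD2)
  (∀ a b : A, d.D (brk a b) = brk (d.D a) b + brk a (d.D b) + d.eta a • d.D b - d.eta b • d.D a) ∧
  -- (GF1)
  (∀ a b : A, brk a (d.T b) - d.p b • d.D a - d.D (circ b a) + d.T (brk b a)
      + circ (d.D b) a + d.eta b • d.S a + circ b (d.D a) + d.eta a • d.T b = 0) ∧
  -- (GF2)
  (∀ a b : A, d.p (brk b a) + d.eta b * d.q a - d.eta (circ b a) = 0) ∧
  -- (GF3)
  (∀ a b : A, brk a (d.S b) - d.q b • d.D a - brk b (d.S a) + d.q a • d.D b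
      + circ (d.D a) b + d.eta a • d.S b - circ (d.D b) a - d.eta b • d.S a
      - d.S (brk a b) = 0) ∧
  -- (GF4)
  (∀ a b : A, d.q (brk a b) = 0) ∧
  -- (GF5)
  (∀ a : A, brk a d.a1 - d.k • d.D a - d.D (d.S a) + d.T (d.D a)
      + (2 * d.eta a) • d.a1 + d.S (d.D a) = 0) ∧
  -- (GF6)
  (∀ a : A, d.k * d.eta a - d.eta (d.S a) + d.p (d.D a) + d.q (d.D a) = 0)

end GDExt

namespace GDExt

variable {K E : Type*} [Field K] [AddCommGroup E] [Module K E]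

/-- The GD bialgebra structures on `E` containing the GD bialgebra `(A, circ, brk)`
as a subalgebra (i.e. restricting to the given operations on `A`). -/
def GDStrOn (A : Submodule K E) (circ brk : ↥A →ₗ[K] ↥A →ₗ[K] ↥A) : Type _ :=
  {s : (E →ₗ[K] E →ₗ[K] E) × (E →ₗ[K] E →ₗ[K] E) //
    IsGD (fun u v => s.1 u v) (fun u v => s.2 u v) ∧
    ∀ a b : ↥A, s.1 a b = ((circ a b : ↥A) : E) ∧ s.2 a b = ((brk a b : ↥A) : E)}

/-- Equivalence of GD bialgebra structures on `E` containing `A` as a subalgebra: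
there is a GD bialgebra isomorphism whose restriction to `A` is the identity. -/
def GDStrEquiv (A : Submodule K E) (circ brk : ↥A →ₗ[K] ↥A →ₗ[K] ↥A)
    (s s' : GDStrOn A circ brk) : Prop :=
  ∃ φ : E ≃ₗ[K] E,
    (∀ u v : E, φ (s.1.1 u v) = s'.1.1 (φ u) (φ v)) ∧
    (∀ u v : E, φ (s.1.2 u v) = s'.1.2 (φ u) (φ v)) ∧
    (∀ a : ↥A, φ (a : E) = (a : E))

end GDExt

namespace GDExt

section Aux

variable {K E : Type*} [Field K] [AddCommGroup E] [Module K E]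
variable {A : Submodule K E} {x : E}

noncomputable def piA (hc : IsCompl A (K ∙ x)) : E →ₗ[K] ↥A :=
  A.linearProjOfIsCompl _ hc

noncomputable def lamA (hx0 : x ≠ 0) (hc : IsCompl A (K ∙ x)) : E →ₗ[K] K :=
  ((LinearEquiv.toSpanNonzeroSingleton K E x hx0).symm : (K ∙ x) →ₗ[K] K) ∘ₗ
    ((K ∙ x).linearProjOfIsCompl A hc.symm)

@[simp] lemma piA_coe (hc : IsCompl A (K ∙ x)) (a : ↥A) : piA hc ↑a = a :=
  Submodule.linearProjOfIsCompl_apply_left hc a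

@[simp] lemma piA_x (hc : IsCompl A (K ∙ x)) : piA hc x = 0 :=
  Submodule.projectionOnto_apply_of_mem_right hc (Submodule.mem_span_singleton_self x)

@[simp] lemma lamA_coe (hx0 : x ≠ 0) (hc : IsCompl A (K ∙ x)) (a : ↥A) :
    lamA hx0 hc ↑a = 0 := by
  have h : (K ∙ x).linearProjOfIsCompl A hc.symm ↑a = 0 :=
    Submodule.projectionOnto_apply_of_mem_right hc.symm a.2
  rw [lamA, LinearMap.comp_apply, h]
  simp

@[simp] lemma lamA_x (hx0 : x ≠ 0) (hc : IsCompl A (K ∙ x)) : lamA hx0 hc x = 1 := by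
  have h1 : (K ∙ x).linearProjOfIsCompl A hc.symm x
      = (⟨x, Submodule.mem_span_singleton_self x⟩ : ↥(K ∙ x)) :=
    Submodule.linearProjOfIsCompl_apply_left hc.symm ⟨x, Submodule.mem_span_singleton_self x⟩
  have h2 : LinearEquiv.toSpanNonzeroSingleton K E x hx0 1
      = (⟨x, Submodule.mem_span_singleton_self x⟩ : ↥(K ∙ x)) := by
    apply Subtype.ext; simp
  rw [lamA, LinearMap.comp_apply, h1, ← h2]
  exact (LinearEquiv.toSpanNonzeroSingleton K E x hx0).symm_apply_apply 1

lemma decompA (hx0 : x ≠ 0) (hc : IsCompl A (K ∙ x)) (u : E) :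
    ↑(piA hc u) + lamA hx0 hc u • x = u := by
  have h0 := Submodule.projection_add_projection_eq_self hc u
  have h2 : ↑((K ∙ x).linearProjOfIsCompl A hc.symm u) = lamA hx0 hc u • x := by
    have h3 : LinearEquiv.toSpanNonzeroSingleton K E x hx0 (lamA hx0 hc u)
        = (K ∙ x).linearProjOfIsCompl A hc.symm u := by
      rw [lamA]; simp
    rw [← h3]; simp
  rw [piA, ← h2]; exact h0

lemma exists_decompA (hx0 : x ≠ 0) (hc : IsCompl A (K ∙ x)) (u : E) :
    ∃ (a : ↥A) (α : K), u = ↑a + α • x :=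
  ⟨piA hc u, lamA hx0 hc u, (decompA hx0 hc u).symm⟩

lemma smul_x_cancel (hx0 : x ≠ 0) {c d : K} (h : c • x = d • x) : c = d :=
  smul_left_injective K hx0 h

/-- The product on `E` built from an SF2 flag datum `(S, k, D)`. -/
noncomputable def Mmap (hx0 : x ≠ 0) (hc : IsCompl A (K ∙ x))
    (circ : ↥A →ₗ[K] ↥A →ₗ[K] ↥A) (S : ↥A →ₗ[K] ↥A) (k : K) : E →ₗ[K] E →ₗ[K] E :=
  LinearMap.mk₂ K (fun u v =>
    ↑(circ (piA hc u) (piA hc v) + lamA hx0 hc u • S (piA hc v))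
      + ((k * lamA hx0 hc u) * lamA hx0 hc v) • x)
    (by intro u u' v; simp [map_add, add_smul, mul_add, add_mul]; try module)
    (by intro c u v; simp [map_smul, smul_smul, mul_assoc, mul_left_comm]; try module)
    (by intro u v v'; simp [map_add, smul_add, mul_add]; try module)
    (by intro c u v; simp [map_smul, smul_smul, mul_assoc, mul_left_comm]; try module)

/-- The bracket on `E` built from an SF2 flag datum `(S, k, D)`. -/
noncomputable def Bmap (hx0 : x ≠ 0) (hc : IsCompl A (K ∙ x))
    (brk : ↥A →ₗ[K] ↥A →ₗ[K] ↥A) (D : ↥A →ₗ[K] ↥A) : E →ₗ[K] E →ₗ[K] E :=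
  LinearMap.mk₂ K (fun u v =>
    ↑(brk (piA hc u) (piA hc v) + lamA hx0 hc u • D (piA hc v)
       - lamA hx0 hc v • D (piA hc u)))
    (by intro u u' v; simp [map_add, add_smul, smul_add]; try module)
    (by intro c u v; simp [map_smul, smul_smul, smul_sub]; try module)
    (by intro u v v'; simp [map_add, add_smul, smul_add]; try module)
    (by intro c u v; simp [map_smul, smul_smul, smul_sub]; try module)

lemma Mmap_apply (hx0 : x ≠ 0) (hc : IsCompl A (K ∙ x))
    (circ : ↥A →ₗ[K] ↥A →ₗ[K] ↥A) (S : ↥A →ₗ[K] ↥A) (k : K) (u v : E) :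
    Mmap hx0 hc circ S k u v =
    ↑(circ (piA hc u) (piA hc v) + lamA hx0 hc u • S (piA hc v))
      + ((k * lamA hx0 hc u) * lamA hx0 hc v) • x := rfl

lemma Bmap_apply (hx0 : x ≠ 0) (hc : IsCompl A (K ∙ x))
    (brk : ↥A →ₗ[K] ↥A →ₗ[K] ↥A) (D : ↥A →ₗ[K] ↥A) (u v : E) :
    Bmap hx0 hc brk D u v =
    ↑(brk (piA hc u) (piA hc v) + lamA hx0 hc u • D (piA hc v)
       - lamA hx0 hc v • D (piA hc u)) := rfl

lemma Mmap_coe_coe (hx0 : x ≠ 0) (hc : IsCompl A (K ∙ x))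
    (circ : ↥A →ₗ[K] ↥A →ₗ[K] ↥A) (S : ↥A →ₗ[K] ↥A) (k : K) (a b : ↥A) :
    Mmap hx0 hc circ S k ↑a ↑b = ↑(circ a b) := by
  simp [Mmap_apply]

lemma Bmap_coe_coe (hx0 : x ≠ 0) (hc : IsCompl A (K ∙ x))
    (brk : ↥A →ₗ[K] ↥A →ₗ[K] ↥A) (D : ↥A →ₗ[K] ↥A) (a b : ↥A) :
    Bmap hx0 hc brk D ↑a ↑b = ↑(brk a b) := by
  simp [Bmap_apply]

/-- Antisymmetry from alternation. -/
lemma anti_of_alt {M N : Type*} [AddCommGroup M] [AddCommGroup N] [Module K M] [Module K N]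
    (f : M →ₗ[K] M →ₗ[K] N) (h : ∀ u, f u u = 0) (u v : M) : f u v = - f v u := by
  have h2 := h (u + v)
  simp only [map_add, LinearMap.add_apply, h u, h v] at h2
  have h3 : f u v + f v u = 0 := by rw [← h2]; abel
  exact eq_neg_of_add_eq_zero_left h3

lemma isGD_construct (hx0 : x ≠ 0) (hc : IsCompl A (K ∙ x))
    (circ brk : ↥A →ₗ[K] ↥A →ₗ[K] ↥A)
    (hGD : IsGD (fun a b : ↥A => circ a b) (fun a b : ↥A => brk a b))
    (S D : ↥A →ₗ[K] ↥A) (k : K)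
    (hS1 : ∀ a b, S (circ a b) = circ (S a) b + circ a (S b))
    (hS2 : ∀ a b, circ (S a) b = circ (S b) a)
    (hkS : ∀ a, k • S a = 0)
    (hD1 : ∀ a b, D (brk a b) = brk (D a) b + brk a (D b))
    (hD2 : ∀ a b, D (circ a b) = circ (D a) b + circ a (D b))
    (hGF3 : ∀ a b, brk a (S b) - brk b (S a) + circ (D a) b - circ (D b) a - S (brk a b) = 0)
    (hDS : ∀ a, D (S a) = S (D a) - k • D a) :
    IsGD (fun u v : E => Mmap hx0 hc circ S k u v) (fun u v : E => Bmap hx0 hc brk D u v) := by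
  have hN1 : ∀ a b c : ↥A, circ (circ a b) c - circ a (circ b c)
      = circ (circ b a) c - circ b (circ a c) := hGD.1.1
  have hN2 : ∀ a b c : ↥A, circ (circ a b) c = circ (circ a c) b := hGD.1.2
  have hJ0 : ∀ a : ↥A, brk a a = 0 := hGD.2.1.1
  have hJac : ∀ a b c : ↥A, brk a (brk b c) = brk (brk a b) c + brk b (brk a c) := hGD.2.1.2
  have hCom : ∀ a b c : ↥A, brk a (circ b c) - brk c (circ b a) + circ (brk b a) c
      - circ (brk b c) a - circ b (brk a c) = 0 := hGD.2.2
  have hanti : ∀ a b : ↥A, brk a b = - brk b a := anti_of_alt brk hJ0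
  -- coercised versions
  have hN1' : ∀ a b c : ↥A, (↑(circ (circ a b) c) : E) - ↑(circ a (circ b c))
      = ↑(circ (circ b a) c) - ↑(circ b (circ a c)) := fun a b c => by
    have h0 := congrArg (fun t : ↥A => (t : E)) (hN1 a b c); push_cast at h0; exact h0
  have hN2' : ∀ a b c : ↥A, (↑(circ (circ a b) c) : E) = ↑(circ (circ a c) b) :=
    fun a b c => congrArg _ (hN2 a b c)
  have hJac' : ∀ a b c : ↥A, (↑(brk a (brk b c)) : E)
      = ↑(brk (brk a b) c) + ↑(brk b (brk a c)) := fun a b c => by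
    have h0 := congrArg (fun t : ↥A => (t : E)) (hJac a b c); push_cast at h0; exact h0
  have hCom' : ∀ a b c : ↥A, (↑(brk a (circ b c)) : E) - ↑(brk c (circ b a))
      + ↑(circ (brk b a) c) - ↑(circ (brk b c) a) - ↑(circ b (brk a c)) = 0 := fun a b c => by
    have h0 := congrArg (fun t : ↥A => (t : E)) (hCom a b c); push_cast at h0; exact h0
  have hanti' : ∀ a b : ↥A, (↑(brk a b) : E) = -↑(brk b a) := fun a b => by
    have h0 := congrArg (fun t : ↥A => (t : E)) (hanti a b); push_cast at h0; exact h0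
  have hS1' : ∀ a b : ↥A, (↑(S (circ a b)) : E) = ↑(circ (S a) b) + ↑(circ a (S b)) :=
    fun a b => by have h0 := congrArg (fun t : ↥A => (t : E)) (hS1 a b); push_cast at h0; exact h0
  have hS2' : ∀ a b : ↥A, (↑(circ (S a) b) : E) = ↑(circ (S b) a) :=
    fun a b => congrArg _ (hS2 a b)
  have hkS' : ∀ a : ↥A, (k • (↑(S a) : E)) = 0 := fun a => by
    rw [← Submodule.coe_smul, hkS a, Submodule.coe_zero]
  have hD1' : ∀ a b : ↥A, (↑(D (brk a b)) : E) = ↑(brk (D a) b) + ↑(brk a (D b)) :=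
    fun a b => by have h0 := congrArg (fun t : ↥A => (t : E)) (hD1 a b); push_cast at h0; exact h0
  have hD2' : ∀ a b : ↥A, (↑(D (circ a b)) : E) = ↑(circ (D a) b) + ↑(circ a (D b)) :=
    fun a b => by have h0 := congrArg (fun t : ↥A => (t : E)) (hD2 a b); push_cast at h0; exact h0
  have hGF3' : ∀ a b : ↥A, (↑(brk a (S b)) : E) - ↑(brk b (S a)) + ↑(circ (D a) b)
      - ↑(circ (D b) a) - ↑(S (brk a b)) = 0 := fun a b => by
    have h0 := congrArg (fun t : ↥A => (t : E)) (hGF3 a b); push_cast at h0; exact h0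
  have hDS' : ∀ a : ↥A, (↑(D (S a)) : E) = ↑(S (D a)) - k • ↑(D a) := fun a => by
    have h0 := congrArg (fun t : ↥A => (t : E)) (hDS a); push_cast at h0; exact h0
  refine ⟨⟨?_, ?_⟩, ⟨?_, ?_⟩, ?_⟩
  · -- Novikov left-symmetry
    intro u v w
    simp only [Mmap_apply, map_add, map_smul, LinearMap.add_apply, LinearMap.smul_apply,
      piA_coe, piA_x, lamA_coe, lamA_x, map_zero, LinearMap.zero_apply, smul_zero,
      zero_add, add_zero, mul_zero, zero_smul, mul_one, zero_mul]
    push_cast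
    linear_combination (norm := module) hN1' (piA hc u) (piA hc v) (piA hc w)
      + lamA hx0 hc v • hS1' (piA hc u) (piA hc w)
      - lamA hx0 hc u • hS1' (piA hc v) (piA hc w)
  · -- Novikov right-symmetry
    intro u v w
    simp only [Mmap_apply, map_add, map_smul, LinearMap.add_apply, LinearMap.smul_apply,
      piA_coe, piA_x, lamA_coe, lamA_x, map_zero, LinearMap.zero_apply, smul_zero,
      zero_add, add_zero, mul_zero, zero_smul, mul_one, zero_mul]
    push_cast
    linear_combination (norm := module) hN2' (piA hc u) (piA hc v) (piA hc w)
      + lamA hx0 hc u • hS2' (piA hc v) (piA hc w)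
      + (lamA hx0 hc u * lamA hx0 hc v) • hkS' (piA hc w)
      - (lamA hx0 hc u * lamA hx0 hc w) • hkS' (piA hc v)
  · -- alternating
    intro u
    simp only [Bmap_apply, hJ0 (piA hc u)]
    simp
  · -- Jacobi
    intro u v w
    simp only [Bmap_apply, map_add, map_smul, map_sub, LinearMap.add_apply,
      LinearMap.smul_apply, LinearMap.sub_apply, piA_coe, piA_x, lamA_coe, lamA_x, map_zero,
      LinearMap.zero_apply, smul_zero, zero_add, add_zero, mul_zero, zero_smul, mul_one,
      zero_mul, sub_zero, zero_sub]
    push_cast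
    linear_combination (norm := module) hJac' (piA hc u) (piA hc v) (piA hc w)
      + lamA hx0 hc u • hD1' (piA hc v) (piA hc w)
      - lamA hx0 hc v • hD1' (piA hc u) (piA hc w)
      + lamA hx0 hc w • hD1' (piA hc u) (piA hc v)
      + lamA hx0 hc w • hanti' (D (piA hc u)) (piA hc v)
  · -- compatibility
    intro u v w
    simp only [Mmap_apply, Bmap_apply, map_add, map_smul, map_sub, LinearMap.add_apply,
      LinearMap.smul_apply, LinearMap.sub_apply, piA_coe, piA_x, lamA_coe, lamA_x, map_zero,
      LinearMap.zero_apply, smul_zero, zero_add, add_zero, mul_zero, zero_smul, mul_one,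
      zero_mul, sub_zero, zero_sub]
    push_cast
    linear_combination (norm := module) hCom' (piA hc u) (piA hc v) (piA hc w)
      + lamA hx0 hc v • hGF3' (piA hc u) (piA hc w)
      + lamA hx0 hc u • hD2' (piA hc v) (piA hc w)
      - lamA hx0 hc w • hD2' (piA hc v) (piA hc u)
      + (lamA hx0 hc u * lamA hx0 hc v) • hDS' (piA hc w)
      - (lamA hx0 hc v * lamA hx0 hc w) • hDS' (piA hc u)

lemma vanish_of_comm {V : Type*} [AddCommGroup V] [Module K V]
    (circ : ↥A →ₗ[K] ↥A →ₗ[K] ↥A)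
    (hperf : Submodule.span K {c : ↥A | ∃ a b : ↥A, c = circ a b - circ b a} = ⊤)
    (f : ↥A →ₗ[K] V) (h : ∀ a b : ↥A, f (circ a b - circ b a) = 0) : f = 0 := by
  have hle : Submodule.span K {c : ↥A | ∃ a b : ↥A, c = circ a b - circ b a}
      ≤ LinearMap.ker f := by
    rw [Submodule.span_le]
    rintro c ⟨a, b, rfl⟩
    exact h a b
  rw [hperf] at hle
  exact LinearMap.ker_eq_top.mp (top_le_iff.mp hle)

lemma isFlagDatum_mk (circ brk : ↥A →ₗ[K] ↥A →ₗ[K] ↥A)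
    (S D : ↥A →ₗ[K] ↥A) (k : K)
    (hS1 : ∀ a b, S (circ a b) = circ (S a) b + circ a (S b))
    (hS2 : ∀ a b, circ (S a) b = circ (S b) a)
    (hkS : ∀ a, k • S a = 0)
    (hD1 : ∀ a b, D (brk a b) = brk (D a) b + brk a (D b))
    (hD2 : ∀ a b, D (circ a b) = circ (D a) b + circ a (D b))
    (hGF3 : ∀ a b, brk a (S b) - brk b (S a) + circ (D a) b - circ (D b) a - S (brk a b) = 0)
    (hDS : ∀ a, D (S a) = S (D a) - k • D a) :
    IsFlagDatum circ brk ⟨0, 0, S, 0, 0, k, 0, D⟩ := by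
  refine ⟨?_, ?_, ?_, ?_, ?_, ?_, ?_, ?_, ?_, ?_, ?_, ?_, ?_, ?_, ?_, ?_, ?_, ?_, ?_⟩
  · intro a b; simp
  · intro a b; simp
  · intro a b; simpa using hS1 a b
  · intro a b; simp
  · intro a; simp
  · intro a; simp
  · intro a b; simpa using hS2 a b
  · intro a b; simp
  · intro a b; simp
  · intro a; simpa using (hkS a).symm
  · intro a; simp
  · intro a b; simp
  · intro a b; simpa using hD1 a b
  · intro a b
    simp only [LinearMap.zero_apply, map_zero, zero_smul, smul_zero, add_zero, zero_add,
      sub_zero, zero_sub, zero_mul, mul_zero]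
    linear_combination (norm := module) (hD2 b a).symm
  · intro a b; simp
  · intro a b; simpa using hGF3 a b
  · intro a b; simp
  · intro a
    simp only [LinearMap.zero_apply, map_zero, zero_smul, smul_zero, add_zero, zero_add,
      sub_zero, zero_sub, zero_mul, mul_zero]
    linear_combination (norm := module) -(hDS a)
  · intro a; simp

lemma seven_of_isFlagDatum (circ brk : ↥A →ₗ[K] ↥A →ₗ[K] ↥A)
    (d : FlagData K ↥A) (hd : IsFlagDatum circ brk d)
    (hp : d.p = 0) (hq : d.q = 0) (he : d.eta = 0) (hT : d.T = 0) (ha1 : d.a1 = 0) :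
    (∀ a b, d.S (circ a b) = circ (d.S a) b + circ a (d.S b)) ∧
    (∀ a b, circ (d.S a) b = circ (d.S b) a) ∧
    (∀ a, d.k • d.S a = 0) ∧
    (∀ a b, d.D (brk a b) = brk (d.D a) b + brk a (d.D b)) ∧
    (∀ a b, d.D (circ a b) = circ (d.D a) b + circ a (d.D b)) ∧
    (∀ a b, brk a (d.S b) - brk b (d.S a) + circ (d.D a) b - circ (d.D b) a
      - d.S (brk a b) = 0) ∧
    (∀ a, d.D (d.S a) = d.S (d.D a) - d.k • d.D a) := by
  obtain ⟨-, -, fn2, -, -, -, fn6, -, -, fn9, -, -, td2, gf1, -, gf3, -, gf5, -⟩ := hd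
  refine ⟨?_, ?_, ?_, ?_, ?_, ?_, ?_⟩
  · intro a b; have h := fn2 a b; rw [hp, hq, hT] at h; simpa using h
  · intro a b; have h := fn6 a b; rw [hq] at h; simpa using h
  · intro a; have h := fn9 a; rw [hq, hT, ha1] at h
    simp only [LinearMap.zero_apply, map_zero, zero_smul, smul_zero, add_zero, zero_add,
      sub_zero] at h
    exact h.symm
  · intro a b; have h := td2 a b; rw [he] at h; simpa using h
  · intro a b; have h := gf1 b a; rw [hp, he, hT] at h
    simp only [LinearMap.zero_apply, map_zero, zero_smul, smul_zero, add_zero, zero_add,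
      sub_zero, zero_sub, neg_add_eq_zero, zero_mul, mul_zero] at h
    linear_combination (norm := module) -h
  · intro a b; have h := gf3 a b; rw [hq, he] at h; simpa using h
  · intro a; have h := gf5 a; rw [ha1, he, hT] at h
    simp only [LinearMap.zero_apply, map_zero, zero_smul, smul_zero, add_zero, zero_add,
      sub_zero, zero_sub, zero_mul, mul_zero] at h
    linear_combination (norm := module) -h

/-- The linear automorphism of `E` fixing `A` pointwise and sending `x` to `β • x + b`. -/
noncomputable def flagEquiv (hx0 : x ≠ 0) (hc : IsCompl A (K ∙ x)) (β : K) (hβ : β ≠ 0)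
    (b : ↥A) : E ≃ₗ[K] E :=
  LinearEquiv.ofLinear
    (A.subtype ∘ₗ piA hc + (lamA hx0 hc).smulRight (β • x + ↑b))
    (A.subtype ∘ₗ piA hc + (lamA hx0 hc).smulRight (β⁻¹ • x - β⁻¹ • ↑b))
    (by
      apply LinearMap.ext
      intro u
      obtain ⟨a, α, rfl⟩ := exists_decompA hx0 hc u
      simp only [LinearMap.add_apply, LinearMap.comp_apply, LinearMap.coe_comp,
        LinearMap.smulRight_apply, Function.comp_apply, map_add, map_smul, map_sub,
        piA_coe, piA_x, lamA_coe, lamA_x, LinearMap.id_apply, Submodule.coe_subtype,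
        smul_add, smul_sub, smul_smul, mul_one, mul_zero, zero_add, add_zero, zero_smul,
        smul_zero, map_zero, Submodule.coe_smul, Submodule.coe_zero]
      match_scalars <;> field_simp <;> ring
    )
    (by
      apply LinearMap.ext
      intro u
      obtain ⟨a, α, rfl⟩ := exists_decompA hx0 hc u
      simp only [LinearMap.add_apply, LinearMap.comp_apply, LinearMap.coe_comp,
        LinearMap.smulRight_apply, Function.comp_apply, map_add, map_smul, map_sub,
        piA_coe, piA_x, lamA_coe, lamA_x, LinearMap.id_apply, Submodule.coe_subtype,
        smul_add, smul_sub, smul_smul, mul_one, mul_zero, zero_add, add_zero, zero_smul,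
        smul_zero, map_zero, Submodule.coe_smul, Submodule.coe_zero]
      match_scalars <;> field_simp <;> ring
    )

@[simp] lemma flagEquiv_coe (hx0 : x ≠ 0) (hc : IsCompl A (K ∙ x)) (β : K) (hβ : β ≠ 0)
    (b : ↥A) (a : ↥A) : flagEquiv hx0 hc β hβ b ↑a = ↑a := by
  simp [flagEquiv, LinearEquiv.ofLinear_apply]

@[simp] lemma flagEquiv_x (hx0 : x ≠ 0) (hc : IsCompl A (K ∙ x)) (β : K) (hβ : β ≠ 0)
    (b : ↥A) : flagEquiv hx0 hc β hβ b x = β • x + ↑b := by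
  simp [flagEquiv, LinearEquiv.ofLinear_apply]

lemma flagEquiv_gen (hx0 : x ≠ 0) (hc : IsCompl A (K ∙ x)) (β : K) (hβ : β ≠ 0)
    (b : ↥A) (a : ↥A) (α : K) :
    flagEquiv hx0 hc β hβ b (↑a + α • x) = ↑(a + α • b) + (α * β) • x := by
  simp only [map_add, map_smul, flagEquiv_coe, flagEquiv_x, smul_add, smul_smul,
    Submodule.coe_add, Submodule.coe_smul]
  module

lemma equiv_of_scaling (hx0 : x ≠ 0) (hc : IsCompl A (K ∙ x))
    (circ brk : ↥A →ₗ[K] ↥A →ₗ[K] ↥A)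
    (S S' D D' : ↥A →ₗ[K] ↥A) (k k' : K) (β : K) (hβ : β ≠ 0)
    (hS : S = β • S') (hk : k = β * k') (hD : D = β • D') :
    (∀ u v, flagEquiv hx0 hc β hβ 0 (Mmap hx0 hc circ S k u v)
      = Mmap hx0 hc circ S' k' (flagEquiv hx0 hc β hβ 0 u) (flagEquiv hx0 hc β hβ 0 v)) ∧
    (∀ u v, flagEquiv hx0 hc β hβ 0 (Bmap hx0 hc brk D u v)
      = Bmap hx0 hc brk D' (flagEquiv hx0 hc β hβ 0 u) (flagEquiv hx0 hc β hβ 0 v)) := by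
  subst hS hk hD
  constructor
  · intro u v
    obtain ⟨a, α, rfl⟩ := exists_decompA hx0 hc u
    obtain ⟨b, γ, rfl⟩ := exists_decompA hx0 hc v
    simp only [Mmap_apply, map_add, map_smul, LinearMap.add_apply, LinearMap.smul_apply,
      flagEquiv_coe, flagEquiv_x,
      piA_coe, piA_x, lamA_coe, lamA_x, map_zero, LinearMap.zero_apply, smul_zero,
      zero_add, add_zero, mul_zero, zero_smul, mul_one, zero_mul,
      Submodule.coe_add, Submodule.coe_smul, Submodule.coe_zero, ZeroMemClass.coe_zero,
      smul_add, smul_smul]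
    match_scalars <;> ring
  · intro u v
    obtain ⟨a, α, rfl⟩ := exists_decompA hx0 hc u
    obtain ⟨b, γ, rfl⟩ := exists_decompA hx0 hc v
    simp only [Bmap_apply, map_add, map_smul, map_sub, LinearMap.add_apply,
      LinearMap.smul_apply, LinearMap.sub_apply, flagEquiv_coe, flagEquiv_x,
      piA_coe, piA_x, lamA_coe, lamA_x, map_zero,
      LinearMap.zero_apply, smul_zero, zero_add, add_zero, mul_zero, zero_smul, mul_one,
      zero_mul, sub_zero, zero_sub,
      Submodule.coe_add, Submodule.coe_smul, Submodule.coe_zero, Submodule.coe_sub,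
      ZeroMemClass.coe_zero, smul_add, smul_sub, smul_smul]
    push_cast
    match_scalars <;> ring

lemma rel_of_equiv (hx : x ∉ A) (hx0 : x ≠ 0) (hc : IsCompl A (K ∙ x))
    (circ brk : ↥A →ₗ[K] ↥A →ₗ[K] ↥A)
    (hann : ∀ b : ↥A, (∀ a : ↥A, circ a b = 0) → b = 0)
    (S S' D D' : ↥A →ₗ[K] ↥A) (k k' : K) (φ : E ≃ₗ[K] E)
    (hm : ∀ u v, φ (Mmap hx0 hc circ S k u v) = Mmap hx0 hc circ S' k' (φ u) (φ v))
    (hb : ∀ u v, φ (Bmap hx0 hc brk D u v) = Bmap hx0 hc brk D' (φ u) (φ v))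
    (hA : ∀ a : ↥A, φ ↑a = ↑a) :
    ∃ β : K, β ≠ 0 ∧ S = β • S' ∧ k = β * k' ∧ D = β • D' := by
  set c := piA hc (φ x) with hcdef
  set βc := lamA hx0 hc (φ x) with hβdef
  have hφx : φ x = ↑c + βc • x := (decompA hx0 hc (φ x)).symm
  have hβ : βc ≠ 0 := by
    intro h0
    rw [h0, zero_smul, add_zero] at hφx
    obtain ⟨a, α, hu⟩ := exists_decompA hx0 hc (φ.symm x)
    have hx2 : x = ↑a + α • (↑c : E) := by
      conv_lhs => rw [← φ.apply_symm_apply x, hu]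
      rw [map_add, map_smul, hA, hφx]
    exact hx (hx2 ▸ add_mem a.2 (Submodule.smul_mem _ _ c.2))
  -- c = 0
  have hc0 : c = 0 := by
    apply hann
    intro a
    have h := hm ↑a x
    simp only [Mmap_apply, map_add, map_smul, LinearMap.add_apply, LinearMap.smul_apply,
      hA, hφx, piA_coe, piA_x, lamA_coe, lamA_x, map_zero, LinearMap.zero_apply, smul_zero,
      zero_add, add_zero, mul_zero, zero_smul, mul_one, zero_mul, one_smul, smul_smul,
      Submodule.coe_zero] at h
    exact ((ZeroMemClass.coe_eq_zero).mp h.symm)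
  rw [hc0, Submodule.coe_zero, zero_add] at hφx
  have hSeq : ∀ a : ↥A, S a = βc • S' a := by
    intro a
    have h := hm x ↑a
    simp only [Mmap_apply, map_add, map_smul, LinearMap.add_apply, LinearMap.smul_apply,
      hA, hφx, piA_coe, piA_x, lamA_coe, lamA_x, map_zero, LinearMap.zero_apply, smul_zero,
      zero_add, add_zero, mul_zero, zero_smul, mul_one, zero_mul, one_smul, smul_smul] at h
    exact_mod_cast h
  have hkeq : k * βc = βc * (βc * k') := by
    have h := hm x x
    simp only [Mmap_apply, map_add, map_smul, LinearMap.add_apply, LinearMap.smul_apply,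
      hA, hφx, piA_coe, piA_x, lamA_coe, lamA_x, map_zero, LinearMap.zero_apply, smul_zero,
      zero_add, add_zero, mul_zero, zero_smul, mul_one, zero_mul, one_smul,
      Submodule.coe_zero, smul_smul] at h
    exact smul_x_cancel hx0 h
  have hDeq : ∀ a : ↥A, D a = βc • D' a := by
    intro a
    have h := hb x ↑a
    simp only [Bmap_apply, hA, hφx, map_add, map_smul, map_sub, LinearMap.add_apply,
      LinearMap.smul_apply, LinearMap.sub_apply, piA_coe, piA_x, lamA_coe, lamA_x, map_zero,
      LinearMap.zero_apply, smul_zero, zero_add, add_zero, mul_zero, zero_smul, mul_one,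
      zero_mul, one_smul, sub_zero, zero_sub, smul_smul] at h
    exact_mod_cast h
  refine ⟨βc, hβ, ?_, ?_, ?_⟩
  · ext a; exact_mod_cast hSeq a
  · have h2 : k * βc = (βc * k') * βc := by linear_combination hkeq
    exact mul_right_cancel₀ hβ h2
  · ext a; exact_mod_cast hDeq a

lemma gdstr_equivalence (A : Submodule K E) (circ brk : ↥A →ₗ[K] ↥A →ₗ[K] ↥A) :
    Equivalence (GDStrEquiv A circ brk) := by
  constructor
  · intro s
    exact ⟨LinearEquiv.refl K E, fun u v => rfl, fun u v => rfl, fun a => rfl⟩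
  · rintro s s' ⟨φ, h1, h2, h3⟩
    refine ⟨φ.symm, fun u v => ?_, fun u v => ?_, fun a => ?_⟩
    · have h := h1 (φ.symm u) (φ.symm v)
      rw [φ.apply_symm_apply, φ.apply_symm_apply] at h
      rw [← h, φ.symm_apply_apply]
    · have h := h2 (φ.symm u) (φ.symm v)
      rw [φ.apply_symm_apply, φ.apply_symm_apply] at h
      rw [← h, φ.symm_apply_apply]
    · conv_lhs => rw [← h3 a]
      rw [φ.symm_apply_apply]
  · rintro s s' s'' ⟨φ, h1, h2, h3⟩ ⟨ψ, g1, g2, g3⟩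
    refine ⟨φ.trans ψ, fun u v => ?_, fun u v => ?_, fun a => ?_⟩
    · simp only [LinearEquiv.trans_apply, h1, g1]
    · simp only [LinearEquiv.trans_apply, h2, g2]
    · simp only [LinearEquiv.trans_apply, h3, g3]

set_option maxHeartbeats 1000000 in
lemma exists_normal (hx : x ∉ A) (hx0 : x ≠ 0) (hc : IsCompl A (K ∙ x))
    (circ brk : ↥A →ₗ[K] ↥A →ₗ[K] ↥A)
    (hperf : Submodule.span K {c : ↥A | ∃ a b : ↥A, c = circ a b - circ b a} = ⊤)
    (hqc : ∀ T : ↥A →ₗ[K] ↥A,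
      ((∀ a b : ↥A, T (circ a b) = circ (T a) b) ∧
       (∀ a b : ↥A, T (circ a b) - T (circ b a) = circ a (T b) - circ b (T a))) →
      ∃ b0 : ↥A, ∀ a : ↥A, T a = circ a b0)
    (hann : ∀ b : ↥A, (∀ a : ↥A, circ a b = 0) → b = 0)
    (m bR : E →ₗ[K] E →ₗ[K] E)
    (hGDs : IsGD (fun u v : E => m u v) (fun u v : E => bR u v))
    (hres : ∀ a b : ↥A, m ↑a ↑b = ↑(circ a b) ∧ bR ↑a ↑b = ↑(brk a b)) :
    ∃ (S D : ↥A →ₗ[K] ↥A) (k : K),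
      (∀ a b, S (circ a b) = circ (S a) b + circ a (S b)) ∧
      (∀ a b, circ (S a) b = circ (S b) a) ∧
      (∀ a, k • S a = 0) ∧
      (∀ a b, D (brk a b) = brk (D a) b + brk a (D b)) ∧
      (∀ a b, D (circ a b) = circ (D a) b + circ a (D b)) ∧
      (∀ a b, brk a (S b) - brk b (S a) + circ (D a) b - circ (D b) a - S (brk a b) = 0) ∧
      (∀ a, D (S a) = S (D a) - k • D a) ∧
      ∃ φ : E ≃ₗ[K] E,
        (∀ u v, φ (Mmap hx0 hc circ S k u v) = m (φ u) (φ v)) ∧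
        (∀ u v, φ (Bmap hx0 hc brk D u v) = bR (φ u) (φ v)) ∧
        (∀ a : ↥A, φ ↑a = ↑a) := by
  have hres1 : ∀ a b : ↥A, m ↑a ↑b = ↑(circ a b) := fun a b => (hres a b).1
  have hres2 : ∀ a b : ↥A, bR ↑a ↑b = ↑(brk a b) := fun a b => (hres a b).2
  have hN1 : ∀ u v w : E, m (m u v) w - m u (m v w) = m (m v u) w - m v (m u w) := hGDs.1.1
  have hN2 : ∀ u v w : E, m (m u v) w = m (m u w) v := hGDs.1.2
  have hJ0 : ∀ u : E, bR u u = 0 := hGDs.2.1.1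
  have hJac : ∀ u v w : E, bR u (bR v w) = bR (bR u v) w + bR v (bR u w) := hGDs.2.1.2
  have hCom : ∀ u v w : E, bR u (m v w) - bR w (m v u) + m (bR v u) w
      - m (bR v w) u - m v (bR u w) = 0 := hGDs.2.2
  have hanti : ∀ u v : E, bR u v = - bR v u := anti_of_alt bR hJ0
  set Tr : ↥A →ₗ[K] ↥A := piA hc ∘ₗ (m.flip x ∘ₗ A.subtype) with hTr
  set pr : ↥A →ₗ[K] K := lamA hx0 hc ∘ₗ (m.flip x ∘ₗ A.subtype) with hpr
  set Sr : ↥A →ₗ[K] ↥A := piA hc ∘ₗ ((m x) ∘ₗ A.subtype) with hSr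
  set qr : ↥A →ₗ[K] K := lamA hx0 hc ∘ₗ ((m x) ∘ₗ A.subtype) with hqr
  set Dr : ↥A →ₗ[K] ↥A := piA hc ∘ₗ ((bR x) ∘ₗ A.subtype) with hDr
  set er : ↥A →ₗ[K] K := lamA hx0 hc ∘ₗ ((bR x) ∘ₗ A.subtype) with her
  have hmax : ∀ a : ↥A, m ↑a x = ↑(Tr a) + pr a • x := fun a =>
    (decompA hx0 hc (m ↑a x)).symm
  have hxmul : ∀ a : ↥A, m x ↑a = ↑(Sr a) + qr a • x := fun a =>
    (decompA hx0 hc (m x ↑a)).symm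
  have hbxa : ∀ a : ↥A, bR x ↑a = ↑(Dr a) + er a • x := fun a =>
    (decompA hx0 hc (bR x ↑a)).symm
  -- q is multiplicative, hence vanishes by perfectness
  have hq : ∀ a b : ↥A, qr (circ a b) = qr a * qr b := by
    intro a b
    have h := hN1 x ↑a ↑b
    rw [hres1 a b, hxmul a, hxmul b, hmax a] at h
    simp only [map_add, map_smul, LinearMap.add_apply, LinearMap.smul_apply,
      hres1, hxmul, hmax] at h
    have h2 := congrArg (lamA hx0 hc) h
    simp only [map_add, map_smul, map_sub, lamA_coe, lamA_x, smul_eq_mul, mul_one,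
      mul_zero, add_zero, zero_add, sub_zero, zero_sub] at h2
    linear_combination -h2
  have hq0 : ∀ a : ↥A, qr a = 0 := by
    have : qr = 0 := vanish_of_comm circ hperf qr (by
      intro a b
      rw [map_sub, hq, hq]; ring)
    intro a; rw [this]; rfl
  have hp : ∀ a b : ↥A, pr (circ a b) = pr a * qr b := by
    intro a b
    have h := hN2 ↑a ↑b x
    rw [hres1 a b, hmax a] at h
    simp only [map_add, map_smul, LinearMap.add_apply, LinearMap.smul_apply,
      hres1, hxmul, hmax] at h
    have h2 := congrArg (lamA hx0 hc) h
    simp only [map_add, map_smul, map_sub, lamA_coe, lamA_x, smul_eq_mul, mul_one,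
      mul_zero, add_zero, zero_add, sub_zero, zero_sub] at h2
    linear_combination h2
  have hp0 : ∀ a : ↥A, pr a = 0 := by
    have : pr = 0 := vanish_of_comm circ hperf pr (by
      intro a b
      rw [map_sub, hp, hp, hq0, hq0]; ring)
    intro a; rw [this]; rfl
  -- eta vanishes
  have he : ∀ b c : ↥A, er (circ b c) = 0 := by
    intro b c
    have h := hCom x ↑b ↑c
    rw [hres1 b c, hmax b, hbxa c] at h
    rw [hanti ↑b x, hbxa b] at h
    simp only [map_add, map_smul, map_sub, map_neg, LinearMap.add_apply,
      LinearMap.smul_apply, LinearMap.neg_apply, hres1, hres2, hxmul, hmax, hbxa] at h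
    have h2 := congrArg (lamA hx0 hc) h
    simp only [map_add, map_smul, map_sub, map_neg, map_zero, lamA_coe, lamA_x,
      smul_eq_mul, mul_one, mul_zero, add_zero, zero_add, sub_zero, zero_sub,
      hp0, hq0] at h2
    linear_combination h2
  have he0 : ∀ a : ↥A, er a = 0 := by
    have : er = 0 := vanish_of_comm circ hperf er (by
      intro a b
      rw [map_sub, he, he]; ring)
    intro a; rw [this]; rfl
  -- T is a quasicentroid
  have hT1 : ∀ a b : ↥A, Tr (circ a b) = circ (Tr a) b := by
    intro a b
    have h := hN2 ↑a ↑b x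
    rw [hres1 a b, hmax a] at h
    simp only [map_add, map_smul, LinearMap.add_apply, LinearMap.smul_apply,
      hres1, hxmul, hmax, hp0, zero_smul, add_zero] at h
    have h2 := congrArg (piA hc) h
    simp only [map_add, map_smul, piA_coe, piA_x, smul_zero, add_zero] at h2
    exact h2
  have hT2 : ∀ a b : ↥A, Tr (circ a b) - Tr (circ b a)
      = circ a (Tr b) - circ b (Tr a) := by
    intro a b
    have h := hN1 ↑a ↑b x
    rw [hres1 a b, hres1 b a, hmax a, hmax b] at h
    simp only [map_add, map_smul, map_sub, LinearMap.add_apply, LinearMap.smul_apply,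
      hres1, hxmul, hmax, hp0, zero_smul, add_zero] at h
    have h2 := congrArg (piA hc) h
    simp only [map_add, map_smul, map_sub, piA_coe, piA_x, smul_zero, add_zero,
      sub_zero] at h2
    linear_combination (norm := module) h2
  obtain ⟨b0, hb0⟩ := hqc Tr ⟨hT1, hT2⟩
  set x' : E := x - ↑b0 with hxp
  -- generator values relative to x'
  have gax : ∀ a : ↥A, m ↑a x' = 0 := by
    intro a
    rw [hxp, map_sub, hmax a, hres1 a b0, hb0 a, hp0 a, zero_smul, add_zero, sub_self]
  set S2 : ↥A →ₗ[K] ↥A := Sr - circ b0 with hS2def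
  set D2 : ↥A →ₗ[K] ↥A := Dr - brk b0 with hD2def
  have gxa : ∀ a : ↥A, m x' ↑a = ↑(S2 a) := by
    intro a
    rw [hxp, map_sub, LinearMap.sub_apply, hxmul a, hres1 b0 a, hq0 a, zero_smul, add_zero,
      hS2def]
    simp only [LinearMap.sub_apply]
    push_cast
    module
  have gbxa : ∀ a : ↥A, bR x' ↑a = ↑(D2 a) := by
    intro a
    rw [hxp, map_sub, LinearMap.sub_apply, hbxa a, hres2 b0 a, he0 a, zero_smul, add_zero,
      hD2def]
    simp only [LinearMap.sub_apply]
    push_cast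
    module
  have gbax : ∀ a : ↥A, bR ↑a x' = -↑(D2 a) := by
    intro a
    rw [hanti, gbxa a]
  have gbxx : bR x' x' = 0 := hJ0 x'
  set kk : K := lamA hx0 hc (m x' x') with hkk
  set a2 : ↥A := piA hc (m x' x') + kk • b0 with ha2def
  have gxx0 : m x' x' = ↑a2 + kk • x' := by
    have hdec : m x' x' = ↑(piA hc (m x' x')) + lamA hx0 hc (m x' x') • x :=
      (decompA hx0 hc (m x' x')).symm
    rw [hdec, ha2def, hkk, hxp]
    push_cast
    module
  have ha2 : a2 = 0 := by
    apply hann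
    intro a
    have h := hN1 ↑a x' x'
    rw [gxx0] at h
    simp only [gax, gxa, hres1, map_zero, map_add, map_smul, LinearMap.zero_apply,
      LinearMap.smul_apply, smul_zero, add_zero, zero_sub, sub_zero, zero_add] at h
    have h2 : (↑(circ a a2) : E) = 0 := by linear_combination (norm := module) -h
    exact_mod_cast h2
  have gxx : m x' x' = kk • x' := by rw [gxx0, ha2]; push_cast; module
  -- the seven conditions
  have c1 : ∀ a b : ↥A, S2 (circ a b) = circ (S2 a) b + circ a (S2 b) := by
    intro a b
    have h := hN1 x' ↑a ↑b
    simp only [hres1, gxa, gax, map_zero, LinearMap.zero_apply, zero_sub, sub_zero] at h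
    have h2 : (↑(S2 (circ a b)) : E) = ↑(circ (S2 a) b) + ↑(circ a (S2 b)) := by
      linear_combination (norm := module) -h
    exact_mod_cast h2
  have c2 : ∀ a b : ↥A, circ (S2 a) b = circ (S2 b) a := by
    intro a b
    have h := hN2 x' ↑a ↑b
    simp only [hres1, gxa] at h
    exact_mod_cast h
  have c3 : ∀ a : ↥A, kk • S2 a = 0 := by
    intro a
    have h := hN2 x' x' ↑a
    rw [gxx] at h
    simp only [map_smul, LinearMap.smul_apply, gxa, gax, hres1] at h
    have h2 : (↑(kk • S2 a) : E) = 0 := by push_cast; linear_combination (norm := module) h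
    exact_mod_cast h2
  have c4 : ∀ a b : ↥A, D2 (brk a b) = brk (D2 a) b + brk a (D2 b) := by
    intro a b
    have h := hJac x' ↑a ↑b
    simp only [hres2, gbxa] at h
    exact_mod_cast h
  have c5 : ∀ a b : ↥A, D2 (circ a b) = circ (D2 a) b + circ a (D2 b) := by
    intro a b
    have h := hCom x' ↑a ↑b
    simp only [hres1, hres2, gxa, gax, gbxa, gbax, map_zero, map_neg, map_smul,
      LinearMap.zero_apply, LinearMap.neg_apply, smul_neg, neg_neg, zero_sub, sub_zero,
      add_zero, zero_add] at h
    have h2 : (↑(D2 (circ a b)) : E) = ↑(circ (D2 a) b) + ↑(circ a (D2 b)) := by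
      linear_combination (norm := module) h
    exact_mod_cast h2
  have c6 : ∀ a b : ↥A, brk a (S2 b) - brk b (S2 a) + circ (D2 a) b - circ (D2 b) a
      - S2 (brk a b) = 0 := by
    intro a b
    have h := hCom ↑a x' ↑b
    simp only [hres1, hres2, gxa, gax, gbxa, gbax, map_zero, map_neg, map_smul,
      LinearMap.zero_apply, LinearMap.neg_apply, smul_neg, neg_neg, zero_sub, sub_zero,
      add_zero, zero_add] at h
    have h2 : (↑(brk a (S2 b)) : E) - ↑(brk b (S2 a)) + ↑(circ (D2 a) b)
        - ↑(circ (D2 b) a) - ↑(S2 (brk a b)) = 0 := by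
      linear_combination (norm := module) h
    exact_mod_cast h2
  have c7 : ∀ a : ↥A, D2 (S2 a) = S2 (D2 a) - kk • D2 a := by
    intro a
    have h := hCom x' x' ↑a
    rw [gxx, gbxx] at h
    simp only [hres1, hres2, gxa, gax, gbxa, gbax, map_zero, map_neg, map_smul,
      LinearMap.zero_apply, LinearMap.neg_apply, smul_neg, neg_neg, zero_sub, sub_zero,
      add_zero, zero_add] at h
    have h2 : (↑(D2 (S2 a)) : E) = ↑(S2 (D2 a)) - kk • ↑(D2 a) := by
      linear_combination (norm := module) h
    exact_mod_cast h2
  -- the equivalence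
  set φ : E ≃ₗ[K] E := flagEquiv hx0 hc 1 one_ne_zero (-b0) with hφdef
  have hφA : ∀ a : ↥A, φ ↑a = ↑a := fun a => flagEquiv_coe hx0 hc 1 one_ne_zero (-b0) a
  have hφx : φ x = x' := by
    rw [hφdef, flagEquiv_x, hxp]
    push_cast
    module
  have hφgen : ∀ (a : ↥A) (α : K), φ (↑a + α • x) = ↑a + α • x' := by
    intro a α
    rw [map_add, map_smul, hφA, hφx]
  have hφm : ∀ u v, φ (Mmap hx0 hc circ S2 kk u v) = m (φ u) (φ v) := by
    intro u v
    obtain ⟨a, α, rfl⟩ := exists_decompA hx0 hc u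
    obtain ⟨b, γ, rfl⟩ := exists_decompA hx0 hc v
    rw [hφgen a α, hφgen b γ]
    simp only [Mmap_apply, map_add, map_smul, LinearMap.add_apply, LinearMap.smul_apply,
      piA_coe, piA_x, lamA_coe, lamA_x, mul_one, mul_zero, zero_mul, zero_add, add_zero,
      zero_smul, smul_zero, map_zero, LinearMap.zero_apply, hres1, gxa, gax, gxx,
      hφA, hφx, smul_smul]
    push_cast
    module
  have hφb : ∀ u v, φ (Bmap hx0 hc brk D2 u v) = bR (φ u) (φ v) := by
    intro u v
    obtain ⟨a, α, rfl⟩ := exists_decompA hx0 hc u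
    obtain ⟨b, γ, rfl⟩ := exists_decompA hx0 hc v
    rw [hφgen a α, hφgen b γ]
    simp only [Bmap_apply, map_add, map_smul, map_sub, LinearMap.add_apply,
      LinearMap.smul_apply, LinearMap.sub_apply, piA_coe, piA_x, lamA_coe, lamA_x,
      mul_one, mul_zero, zero_mul, zero_add, add_zero, zero_smul, smul_zero, map_zero,
      LinearMap.zero_apply, sub_zero, zero_sub, hres2, gbxa, gbax, gbxx,
      hφA, hφx, smul_smul, smul_neg]
    push_cast
    module
  exact ⟨S2, D2, kk, c1, c2, c3, c4, c5, c6, c7, φ, hφm, hφb, hφA⟩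

end Aux



end GDExt

namespace GDExt

/-- Corollary, part 1, special case: if moreover
`{b | a∘b = 0 for all a} = {0}`, then `Extd(E,A)` is in bijection with
`(SF2(A)/≈) ⊔ (SF3(A)/≈)`. -/
theorem extd_bijection_SF2_SF3
    {K E : Type*} [Field K] [AddCommGroup E] [Module K E]
    (A : Submodule K E) (x : E) (hx : x ∉ A) (hc : IsCompl A (K ∙ x))
    (circ brk : ↥A →ₗ[K] ↥A →ₗ[K] ↥A)
    (hGD : IsGD (fun a b => circ a b) (fun a b => brk a b))
    (hperf : Submodule.span K {c : ↥A | ∃ a b : ↥A, c = circ a b - circ b a} = ⊤)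
    (hqc : ∀ T : ↥A →ₗ[K] ↥A,
      ((∀ a b : ↥A, T (circ a b) = circ (T a) b) ∧
       (∀ a b : ↥A, T (circ a b) - T (circ b a) = circ a (T b) - circ b (T a))) →
      ∃ b0 : ↥A, ∀ a : ↥A, T a = circ a b0)
    -- {b | a ∘ b = 0 for all a} = {0}
    (hann : ∀ b : ↥A, (∀ a : ↥A, circ a b = 0) → b = 0) :
    Nonempty
      ((Quot (fun d d' : {d : FlagData K ↥A // IsFlagDatum circ brk d ∧
                 d.p = 0 ∧ d.q = 0 ∧ d.eta = 0 ∧ d.T = 0 ∧ d.a1 = 0} =>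
          -- equivalence ≈ on SF2(A)
          ∃ β : K, β ≠ 0 ∧ d.1.S = β • d'.1.S ∧ d.1.k = β * d'.1.k ∧ d.1.D = β • d'.1.D)
        ⊕
        Quot (fun d d' : {d : FlagData K ↥A // IsFlagDatum circ brk d ∧
                 d.p = 0 ∧ d.T = 0 ∧ d.k = 0 ∧ d.q ≠ 0} =>
          -- equivalence ≈ on SF3(A)
          d.1.q = d'.1.q ∧ d.1.eta = d'.1.eta ∧
          ∃ β : K, β ≠ 0 ∧ d.1.S = β • d'.1.S ∧ d.1.a1 = (β * β) • d'.1.a1 ∧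
            d.1.D = β • d'.1.D))
      ≃ Quot (GDStrEquiv A circ brk)) := by
  have hx0 : x ≠ 0 := fun h => hx (h ▸ A.zero_mem)
  -- SF3 is empty since q is multiplicative and the sub-adjacent Lie algebra is perfect
  haveI hSF3 : IsEmpty {d : FlagData K ↥A // IsFlagDatum circ brk d ∧
      d.p = 0 ∧ d.T = 0 ∧ d.k = 0 ∧ d.q ≠ 0} := by
    constructor
    rintro ⟨d, hd, -, -, -, hq⟩
    apply hq
    apply vanish_of_comm circ hperf d.q
    intro a b
    have h1 := hd.2.1
    rw [map_sub, h1 a b, h1 b a]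
    ring
  haveI : IsEmpty (Quot (fun d d' : {d : FlagData K ↥A // IsFlagDatum circ brk d ∧
      d.p = 0 ∧ d.T = 0 ∧ d.k = 0 ∧ d.q ≠ 0} =>
      d.1.q = d'.1.q ∧ d.1.eta = d'.1.eta ∧
      ∃ β : K, β ≠ 0 ∧ d.1.S = β • d'.1.S ∧ d.1.a1 = (β * β) • d'.1.a1 ∧
        d.1.D = β • d'.1.D)) :=
    ⟨fun q => @Quot.ind _ _ (fun _ => False) (fun d => hSF3.false d) q⟩
  -- the map from SF2 data to GD structures
  have Fprop : ∀ d : {d : FlagData K ↥A // IsFlagDatum circ brk d ∧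
      d.p = 0 ∧ d.q = 0 ∧ d.eta = 0 ∧ d.T = 0 ∧ d.a1 = 0},
      IsGD (fun u v : E => Mmap hx0 hc circ d.1.S d.1.k u v)
        (fun u v : E => Bmap hx0 hc brk d.1.D u v) ∧
      ∀ a b : ↥A, Mmap hx0 hc circ d.1.S d.1.k ↑a ↑b = ((circ a b : ↥A) : E) ∧
        Bmap hx0 hc brk d.1.D ↑a ↑b = ((brk a b : ↥A) : E) := by
    intro d
    obtain ⟨hS1, hS2l, hkS, hD1, hD2, hGF3c, hDS⟩ := seven_of_isFlagDatum circ brk d.1 d.2.1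
      d.2.2.1 d.2.2.2.1 d.2.2.2.2.1 d.2.2.2.2.2.1 d.2.2.2.2.2.2
    exact ⟨isGD_construct hx0 hc circ brk hGD d.1.S d.1.D d.1.k hS1 hS2l hkS hD1 hD2 hGF3c hDS,
      fun a b => ⟨Mmap_coe_coe hx0 hc circ d.1.S d.1.k a b, Bmap_coe_coe hx0 hc brk d.1.D a b⟩⟩
  set F : {d : FlagData K ↥A // IsFlagDatum circ brk d ∧
      d.p = 0 ∧ d.q = 0 ∧ d.eta = 0 ∧ d.T = 0 ∧ d.a1 = 0} → GDStrOn A circ brk :=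
    fun d => ⟨(Mmap hx0 hc circ d.1.S d.1.k, Bmap hx0 hc brk d.1.D), Fprop d⟩ with hF
  -- F descends to the quotients
  have Fsound : ∀ d d', (∃ β : K, β ≠ 0 ∧ d.1.S = β • d'.1.S ∧ d.1.k = β * d'.1.k ∧
      d.1.D = β • d'.1.D) → GDStrEquiv A circ brk (F d) (F d') := by
    rintro d d' ⟨β, hβ, hS, hk, hD⟩
    obtain ⟨hm, hb⟩ := equiv_of_scaling hx0 hc circ brk d.1.S d'.1.S d.1.D d'.1.D
      d.1.k d'.1.k β hβ hS hk hD
    exact ⟨flagEquiv hx0 hc β hβ 0, hm, hb, fun a => flagEquiv_coe hx0 hc β hβ 0 a⟩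
  refine ⟨(Equiv.sumEmpty _ _).trans (Equiv.ofBijective
    (Quot.lift (fun d => Quot.mk _ (F d)) (fun d d' hdd' => Quot.sound (Fsound d d' hdd'))) ⟨?_, ?_⟩)⟩
  · -- injectivity
    intro q1 q2 h
    obtain ⟨d, rfl⟩ := Quot.exists_rep q1
    obtain ⟨d', rfl⟩ := Quot.exists_rep q2
    simp only [Quot.lift_mk] at h
    have hequiv : GDStrEquiv A circ brk (F d) (F d') :=
      ((gdstr_equivalence A circ brk).eqvGen_iff).mp (Quot.eq.mp h)
    obtain ⟨φ, hm, hb, hA⟩ := hequiv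
    obtain ⟨β, hβ, hS, hk, hD⟩ := rel_of_equiv hx hx0 hc circ brk hann d.1.S d'.1.S
      d.1.D d'.1.D d.1.k d'.1.k φ hm hb hA
    exact Quot.sound ⟨β, hβ, hS, hk, hD⟩
  · -- surjectivity
    intro q
    obtain ⟨s, rfl⟩ := Quot.exists_rep q
    obtain ⟨S, D, k, c1, c2, c3, c4, c5, c6, c7, φ, hm, hb, hA⟩ :=
      exists_normal hx hx0 hc circ brk hperf hqc hann s.1.1 s.1.2 s.2.1 s.2.2
    refine ⟨Quot.mk _ ⟨⟨0, 0, S, 0, 0, k, 0, D⟩,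
      isFlagDatum_mk circ brk S D k c1 c2 c3 c4 c5 c6 c7, rfl, rfl, rfl, rfl, rfl⟩, ?_⟩
    simp only [Quot.lift_mk]
    exact Quot.sound ⟨φ, hm, hb, hA⟩


end GDExt
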